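/- Let K₁,…,K_d be a strongly separated family of convex bodies in ℝ^d. Then there are at most two affine hyperplanes H (as subsets of ℝ^d of the form {x : ⟨u,x⟩ = α} with u ≠ 0) such that H is tangent to every Kᵢ with every Kᵢ on the same closed side of H, i.e., H ∩ Kᵢ ≠ ∅ for every i and there is a choice of orientation with Kᵢ ⊆ {x : ⟨u,x⟩ ≥ α} for every i. -/

import Mathlib

open scoped InnerProductSpace

/-- A family of sets in `ℝ^d` is strongly separated if every subset of indices can be
strictly separated from its complement by an affine hyperplane. -/
def StronglySeparated {d m : ℕ} (S : Fin m → Set (EuclideanSpace ℝ (Fin d))) : Prop :=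
  ∀ I : Finset (Fin m), ∃ (u : EuclideanSpace ℝ (Fin d)) (α : ℝ), u ≠ 0 ∧
    (∀ i ∈ I, ∀ x ∈ S i, ⟪u, x⟫_ℝ < α) ∧ (∀ i, i ∉ I → ∀ x ∈ S i, α < ⟪u, x⟫_ℝ)

namespace Sandwich

variable {d : ℕ}

local notation "E" => EuclideanSpace ℝ (Fin d)

lemma inner_eq_sum (u x : E) : ⟪u, x⟫_ℝ = ∑ j, u j * x j := by
  rw [PiLp.inner_apply]
  simp [RCLike.inner_apply, starRingEnd_apply, star_trivial]
  exact Finset.sum_congr rfl (fun _ _ => mul_comm _ _)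

/-- lifted vector (y, 1) -/
def lift (y : E) : Fin (d+1) → ℝ := Fin.snoc (fun j => y j) 1

@[simp] lemma lift_castSucc (y : E) (j : Fin d) : lift y j.castSucc = y j := by
  simp [lift]

@[simp] lemma lift_last (y : E) : lift y (Fin.last d) = 1 := by
  simp [lift]

/-- The Radon-type consequence of strong separation, in scalar form. -/
lemma radon_scalar
    (K : Fin d → Set E)
    (hsep : ∀ I : Finset (Fin d), ∃ (u : E) (α : ℝ), u ≠ 0 ∧
      (∀ i ∈ I, ∀ x ∈ K i, ⟪u, x⟫_ℝ < α) ∧ (∀ i, i ∉ I → ∀ x ∈ K i, α < ⟪u, x⟫_ℝ))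
    (x : Fin d → E) (hx : ∀ i, x i ∈ K i)
    (w : Fin d → ℝ) (hcols : ∀ j : Fin d, ∑ i, w i * x i j = 0)
    (hsum : ∑ i, w i = 0) : w = 0 := by
  by_contra hw
  -- positive and negative parts
  set P : Finset (Fin d) := Finset.univ.filter (fun i => 0 < w i) with hP
  set N : Finset (Fin d) := Finset.univ.filter (fun i => w i < 0) with hN
  have hPN : ∀ i, i ∈ P → i ∈ N → False := by
    intro i hiP hiN
    simp only [hP, hN, Finset.mem_filter] at hiP hiN
    linarith [hiP.2, hiN.2]
  have hNne : N.Nonempty := by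
    by_contra hNe
    rw [Finset.not_nonempty_iff_eq_empty] at hNe
    have hnonneg : ∀ i, 0 ≤ w i := by
      intro i
      by_contra hi
      have : i ∈ N := by simp [hN, lt_of_not_ge hi]
      simp [hNe] at this
    have : w = 0 := by
      funext i
      have h1 : ∑ j, w j = 0 := hsum
      have := (Finset.sum_eq_zero_iff_of_nonneg (fun j _ => hnonneg j)).1 h1 i (Finset.mem_univ i)
      exact this
    exact hw this
  have hPne : P.Nonempty := by
    by_contra hPe
    rw [Finset.not_nonempty_iff_eq_empty] at hPe
    have hnonpos : ∀ i, w i ≤ 0 := by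
      intro i
      by_contra hi
      have : i ∈ P := by simp [hP, lt_of_not_ge hi]
      simp [hPe] at this
    have : w = 0 := by
      funext i
      have h2 : ∑ j, (-w) j = 0 := by simpa using hsum
      have := (Finset.sum_eq_zero_iff_of_nonneg (fun j _ => by simpa using hnonpos j)).1 h2 i (Finset.mem_univ i)
      simpa using this
    exact hw this
  -- the separator for P
  obtain ⟨u₀, α₀, -, hlt, hgt⟩ := hsep P
  -- c = sum of positive weights
  have hc : 0 < ∑ i ∈ P, w i := by
    apply Finset.sum_pos
    · intro i hi; exact (Finset.mem_filter.1 hi).2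
    · exact hPne
  -- A := ∑_{i ∈ P} w i * ⟪u₀, x i⟫
  -- upper bound
  have hA1 : ∑ i ∈ P, w i * ⟪u₀, x i⟫_ℝ < (∑ i ∈ P, w i) * α₀ := by
    rw [Finset.sum_mul]
    apply Finset.sum_lt_sum_of_nonempty hPne
    intro i hi
    have hwi : 0 < w i := (Finset.mem_filter.1 hi).2
    have := hlt i hi (x i) (hx i)
    exact mul_lt_mul_of_pos_left this hwi
  -- P-sum equals N-sum of negated weights (coordinatewise)
  have hsplit : ∀ (f : Fin d → ℝ), ∑ i, w i * f i = ∑ i ∈ P, w i * f i + ∑ i ∈ N, w i * f i := by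
    intro f
    have hdisj : Disjoint P N := by
      rw [Finset.disjoint_left]; intro i hiP hiN; exact hPN i hiP hiN
    rw [← Finset.sum_union hdisj]
    symm
    apply Finset.sum_subset (Finset.subset_univ _)
    intro i _ hi
    have : w i = 0 := by
      rcases lt_trichotomy (w i) 0 with h | h | h
      · exact absurd (Finset.mem_union_right _ (by simp [hN, h])) hi
      · exact h
      · exact absurd (Finset.mem_union_left _ (by simp [hP, h])) hi
    simp [this]
  -- key: ∑_{i∈P} w i * ⟪u₀, x i⟫ = ∑_{i∈N} (-w i) * ⟪u₀, x i⟫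
  have hkey : ∑ i ∈ P, w i * ⟪u₀, x i⟫_ℝ = ∑ i ∈ N, (-(w i)) * ⟪u₀, x i⟫_ℝ := by
    have h0 : ∑ i, w i * ⟪u₀, x i⟫_ℝ = 0 := by
      have : ∀ i, w i * ⟪u₀, x i⟫_ℝ = ∑ j, u₀ j * (w i * x i j) := by
        intro i
        rw [inner_eq_sum, Finset.mul_sum]
        congr 1; funext j; ring
      rw [Finset.sum_congr rfl (fun i _ => this i), Finset.sum_comm]
      apply Finset.sum_eq_zero
      intro j _
      rw [← Finset.mul_sum]
      rw [hcols j]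
      ring
    have := hsplit (fun i => ⟪u₀, x i⟫_ℝ)
    simp only [Finset.sum_neg_distrib] at *
    have : ∑ i ∈ P, w i * ⟪u₀, x i⟫_ℝ + ∑ i ∈ N, w i * ⟪u₀, x i⟫_ℝ = 0 := by
      rw [← this]; exact h0
    have h2 : ∑ i ∈ N, (-(w i)) * ⟪u₀, x i⟫_ℝ = - ∑ i ∈ N, w i * ⟪u₀, x i⟫_ℝ := by
      rw [← Finset.sum_neg_distrib]; congr 1; funext i; ring
    linarith
  -- similarly for weights
  have hwkey : ∑ i ∈ P, w i = ∑ i ∈ N, (-(w i)) := by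
    have := hsplit (fun _ => 1)
    simp only [mul_one] at this
    rw [hsum] at this
    have h2 : ∑ i ∈ N, (-(w i)) = - ∑ i ∈ N, w i := by
      rw [← Finset.sum_neg_distrib]
    linarith
  -- lower bound from N side
  have hA2 : (∑ i ∈ P, w i) * α₀ < ∑ i ∈ P, w i * ⟪u₀, x i⟫_ℝ := by
    rw [hkey, hwkey, Finset.sum_mul]
    apply Finset.sum_lt_sum_of_nonempty hNne
    intro i hi
    have hwi : w i < 0 := (Finset.mem_filter.1 hi).2
    have hni : i ∉ P := fun h => hPN i h hi
    have := hgt i hni (x i) (hx i)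
    have hpos : 0 < -(w i) := by linarith
    exact mul_lt_mul_of_pos_left this hpos
  linarith

/-- matrix with rows the lifted transversal points and last row `r` -/
def mat (x : Fin d → E) (r : Fin (d+1) → ℝ) : Matrix (Fin (d+1)) (Fin (d+1)) ℝ :=
  Matrix.of (Fin.snoc (fun i => lift (x i)) r)

@[simp] lemma mat_castSucc (x : Fin d → E) (r : Fin (d+1) → ℝ) (i : Fin d) :
    mat x r i.castSucc = lift (x i) := by
  show (Fin.snoc (fun i => lift (x i)) r : Fin (d+1) → Fin (d+1) → ℝ) i.castSucc = _
  simp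

@[simp] lemma mat_last (x : Fin d → E) (r : Fin (d+1) → ℝ) :
    mat x r (Fin.last d) = r := by
  show (Fin.snoc (fun i => lift (x i)) r : Fin (d+1) → Fin (d+1) → ℝ) (Fin.last d) = r
  simp

lemma mat_updateRow (x : Fin d → E) (r r' : Fin (d+1) → ℝ) :
    (mat x r).updateRow (Fin.last d) r' = mat x r' := by
  ext i j
  rcases Fin.eq_castSucc_or_eq_last i with ⟨k, rfl⟩ | rfl
  · rw [Matrix.updateRow_ne (Fin.castSucc_lt_last k).ne]
    simp
  · simp

lemma mat_smul_last (x : Fin d → E) (r : Fin (d+1) → ℝ) (c : ℝ) :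
    (mat x (c • r)).det = c * (mat x r).det := by
  rw [← mat_updateRow x r (c • r), Matrix.det_updateRow_smul, mat_updateRow]


lemma det_ne_zero_on_fiber
    (K : Fin d → Set E)
    (hsep : ∀ I : Finset (Fin d), ∃ (u : E) (α : ℝ), u ≠ 0 ∧
      (∀ i ∈ I, ∀ x ∈ K i, ⟪u, x⟫_ℝ < α) ∧ (∀ i, i ∉ I → ∀ x ∈ K i, α < ⟪u, x⟫_ℝ))
    (us : E) (αs : ℝ) (hus : us ≠ 0)
    (x : Fin d → E) (hx : ∀ i, x i ∈ K i)
    (hfib : ∀ i, ⟪us, x i⟫_ℝ = αs) :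
    (mat x (Fin.snoc (fun j => us j) (-αs))).det ≠ 0 := by
  intro h0
  obtain ⟨v, hv0, hv⟩ := (Matrix.exists_vecMul_eq_zero_iff).2 h0
  set r : Fin (d+1) → ℝ := Fin.snoc (fun j => us j) (-αs) with hr
  set w : Fin d → ℝ := fun i => v i.castSucc with hw
  set β : ℝ := v (Fin.last d) with hβ
  have hcol : ∀ j, ∑ i, v i * mat x r i j = 0 := by
    intro j
    have := congrFun hv j
    simpa [Matrix.vecMul, dotProduct] using this
  have hEqj : ∀ j' : Fin d, (∑ i, w i * x i j') + β * us j' = 0 := by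
    intro j'
    have := hcol j'.castSucc
    rw [Fin.sum_univ_castSucc] at this
    simpa [hr, hw, hβ] using this
  have hEqlast : (∑ i, w i) + β * (-αs) = 0 := by
    have := hcol (Fin.last d)
    rw [Fin.sum_univ_castSucc] at this
    simpa [hr, hw, hβ] using this
  by_cases hβ0 : β = 0
  · -- dependence among the transversal: contradiction with separation
    have hcols : ∀ j' : Fin d, ∑ i, w i * x i j' = 0 := by
      intro j'; have := hEqj j'; rw [hβ0] at this; linarith
    have hsum : ∑ i, w i = 0 := by rw [hβ0] at hEqlast; linarith
    have : w = 0 := radon_scalar K hsep x hx w hcols hsum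
    apply hv0
    funext i
    rcases Fin.eq_castSucc_or_eq_last i with ⟨k, rfl⟩ | rfl
    · have : w k = 0 := by rw [this]; rfl
      simpa [hw] using this
    · simpa [hβ] using hβ0
  · -- us = 0 : contradiction
    have hkey : β * ((∑ j', us j' ^ 2) + αs ^ 2) = 0 := by
      have h1 : ∑ j', us j' * ((∑ i, w i * x i j') + β * us j') = 0 :=
        Finset.sum_eq_zero (fun j' _ => by rw [hEqj j']; ring)
      have h2 : ∑ j' : Fin d, us j' * (∑ i, w i * x i j') = ∑ i, w i * αs := by
        have e1 : ∀ j' : Fin d, us j' * (∑ i, w i * x i j') = ∑ i, w i * (us j' * x i j') := by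
          intro j'
          rw [Finset.mul_sum]
          exact Finset.sum_congr rfl (fun i _ => by ring)
        rw [Finset.sum_congr rfl (fun j' _ => e1 j'), Finset.sum_comm]
        apply Finset.sum_congr rfl
        intro i _
        rw [← Finset.mul_sum, ← inner_eq_sum, hfib i]
      have h3 : ∑ j' : Fin d, us j' * (β * us j') = β * ∑ j', us j' ^ 2 := by
        rw [Finset.mul_sum]
        exact Finset.sum_congr rfl (fun j' _ => by ring)
      have h4 : (∑ i, w i) = β * αs := by linarith
      have h5 : ∑ j' : Fin d, us j' * ((∑ i, w i * x i j') + β * us j')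
          = ∑ j' : Fin d, us j' * (∑ i, w i * x i j') + ∑ j' : Fin d, us j' * (β * us j') := by
        rw [← Finset.sum_add_distrib]
        exact Finset.sum_congr rfl (fun j' _ => by ring)
      rw [h5, h2, h3] at h1
      have h6 : ∑ i, w i * αs = (∑ i, w i) * αs := by rw [Finset.sum_mul]
      rw [h6, h4] at h1
      nlinarith [h1]
    have hsq : (∑ j' : Fin d, us j' ^ 2) + αs ^ 2 = 0 := by
      rcases mul_eq_zero.1 hkey with h | h
      · exact absurd h hβ0
      · exact h
    have hterm : ∀ j' : Fin d, us j' = 0 := by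
      intro j'
      have hnn : ∀ j ∈ Finset.univ, (0:ℝ) ≤ us j ^ 2 := fun j _ => sq_nonneg _
      have hsum0 : ∑ j' : Fin d, us j' ^ 2 = 0 := by nlinarith [sq_nonneg αs, Finset.sum_nonneg hnn]
      have := (Finset.sum_eq_zero_iff_of_nonneg hnn).1 hsum0 j' (Finset.mem_univ j')
      exact pow_eq_zero_iff (by norm_num) |>.1 this
    apply hus
    refine PiLp.ext fun j' => ?_
    simpa using hterm j'


section Pairwise

/-- the pencil direction -/
noncomputable def pu (u u' : E) (s : ℝ) : E := (1-s) • u - s • u'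
/-- the pencil level -/
noncomputable def pα (α α' : ℝ) (s : ℝ) : ℝ := (1-s) * α - s * α'
/-- the pencil last row -/
noncomputable def prow (u u' : E) (α α' : ℝ) (s : ℝ) : Fin (d+1) → ℝ :=
  Fin.snoc (fun j => pu u u' s j) (-(pα α α' s))

lemma inner_pu (u u' : E) (α α' : ℝ) (s : ℝ) (y : E) :
    ⟪pu u u' s, y⟫_ℝ - pα α α' s = (1-s) * (⟪u, y⟫_ℝ - α) - s * (⟪u', y⟫_ℝ - α') := by
  rw [pu, pα, inner_sub_left, real_inner_smul_left, real_inner_smul_left]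
  ring

lemma prow_zero (u u' : E) (α α' : ℝ) : prow u u' α α' 0 = Fin.snoc (fun j => u j) (-α) := by
  funext j
  rcases Fin.eq_castSucc_or_eq_last j with ⟨k, rfl⟩ | rfl <;>
    simp [prow, pu, pα]

lemma prow_one (u u' : E) (α α' : ℝ) : prow u u' α α' 1 = (-1 : ℝ) • (Fin.snoc (fun j => u' j) (-α') : Fin (d+1) → ℝ) := by
  funext j
  rcases Fin.eq_castSucc_or_eq_last j with ⟨k, rfl⟩ | rfl <;>
    simp [prow, pu, pα]

theorem pairwise_opposite
    (K : Fin d → Set E)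
    (hconv : ∀ i, Convex ℝ (K i)) (hcomp : ∀ i, IsCompact (K i))
    (hsep : ∀ I : Finset (Fin d), ∃ (w : E) (β : ℝ), w ≠ 0 ∧
      (∀ i ∈ I, ∀ x ∈ K i, ⟪w, x⟫_ℝ < β) ∧ (∀ i, i ∉ I → ∀ x ∈ K i, β < ⟪w, x⟫_ℝ))
    (u u' : E) (α α' : ℝ) (hu : u ≠ 0) (hu' : u' ≠ 0)
    (p p' : Fin d → E) (hp : ∀ i, p i ∈ K i) (hp' : ∀ i, p' i ∈ K i)
    (htp : ∀ i, ⟪u, p i⟫_ℝ = α) (htp' : ∀ i, ⟪u', p' i⟫_ℝ = α')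
    (hside : ∀ i, ∀ y ∈ K i, α ≤ ⟪u, y⟫_ℝ) (hside' : ∀ i, ∀ y ∈ K i, α' ≤ ⟪u', y⟫_ℝ)
    (hpar : ∀ c : ℝ, 0 < c → u' ≠ c • u) :
    (mat p (Fin.snoc (fun j => u j) (-α))).det
      * (mat p' (Fin.snoc (fun j => u' j) (-α'))).det < 0 := by
  classical
  -- the pencil direction is everywhere nonzero
  have hpus : ∀ s ∈ Set.Icc (0:ℝ) 1, pu u u' s ≠ 0 := by
    intro s hs hz
    have h1 : (1-s) • u = s • u' := by
      have h : pu u u' s = (1-s) • u - s • u' := rfl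
      rw [h, sub_eq_zero] at hz
      exact hz
    rcases lt_trichotomy s 0 with h | h | h
    · linarith [hs.1]
    · subst h
      apply hu
      have := h1
      simp at this
      exact this
    · rcases lt_trichotomy s 1 with h2 | h2 | h2
      · refine hpar ((1-s)/s) (div_pos (by linarith) h) ?_
        have h3 : u' = s⁻¹ • ((1-s) • u) := by
          rw [h1, smul_smul, inv_mul_cancel₀ (ne_of_gt h), one_smul]
        rw [h3, smul_smul]
        congr 1
        field_simp
      · subst h2
        apply hu'
        have := h1.symm
        simp at this
        exact this
      · linarith [hs.2]
  -- nonvanishing of the determinant on fibers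
  have hdet : ∀ s ∈ Set.Icc (0:ℝ) 1, ∀ x : Fin d → E, (∀ i, x i ∈ K i) →
      (∀ i, ⟪pu u u' s, x i⟫_ℝ = pα α α' s) → (mat x (prow u u' α α' s)).det ≠ 0 := by
    intro s hs x hx hf
    rw [prow]
    exact det_ne_zero_on_fiber K hsep (pu u u' s) (pα α α' s) (hpus s hs) x hx hf
  -- fibers are nonempty
  have hfib : ∀ s ∈ Set.Icc (0:ℝ) 1, ∃ x : Fin d → E,
      (∀ i, x i ∈ K i) ∧ (∀ i, ⟪pu u u' s, x i⟫_ℝ = pα α α' s) := by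
    intro s hs
    have hex : ∀ i : Fin d, ∃ y, y ∈ K i ∧ ⟪pu u u' s, y⟫_ℝ = pα α α' s := by
      intro i
      have hA : ⟪pu u u' s, p i⟫_ℝ ≤ pα α α' s := by
        have h := inner_pu u u' α α' s (p i)
        rw [htp i] at h
        nlinarith [hside' i (p i) (hp i), hs.1]
      have hB : pα α α' s ≤ ⟪pu u u' s, p' i⟫_ℝ := by
        have h := inner_pu u u' α α' s (p' i)
        rw [htp' i] at h
        nlinarith [hside i (p' i) (hp' i), hs.2]
      set A := ⟪pu u u' s, p i⟫_ℝ with hA'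
      set B := ⟪pu u u' s, p' i⟫_ℝ with hB'
      have hcont : ContinuousOn (fun t : ℝ => (1-t) * A + t * B) (Set.Icc 0 1) := by
        apply Continuous.continuousOn
        fun_prop
      have hIVT := intermediate_value_Icc (by norm_num : (0:ℝ) ≤ 1) hcont
      have hmem : pα α α' s ∈ Set.Icc ((1-(0:ℝ)) * A + 0 * B) ((1-(1:ℝ)) * A + 1 * B) := by
        constructor <;> simp <;> linarith
      obtain ⟨t, ht, hteq⟩ := hIVT hmem
      refine ⟨(1-t) • p i + t • p' i, ?_, ?_⟩
      · exact hconv i (hp i) (hp' i) (by linarith [ht.2]) ht.1 (by ring)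
      · rw [inner_add_right, real_inner_smul_right, real_inner_smul_right]
        exact hteq
    choose x hx1 hx2 using hex
    exact ⟨x, hx1, hx2⟩
  set D : ℝ := (mat p (Fin.snoc (fun j => u j) (-α))).det with hDdef
  set D' : ℝ := (mat p' (Fin.snoc (fun j => u' j) (-α'))).det with hD'def
  -- endpoint membership and nonvanishing
  have hfib0 : ∀ i, ⟪pu u u' 0, p i⟫_ℝ = pα α α' 0 := by
    intro i
    have h := inner_pu u u' α α' 0 (p i)
    rw [htp i] at h
    have h2 : ⟪pu u u' 0, p i⟫_ℝ - pα α α' 0 = 0 := by rw [h]; ring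
    linarith
  have hfib1 : ∀ i, ⟪pu u u' 1, p' i⟫_ℝ = pα α α' 1 := by
    intro i
    have h := inner_pu u u' α α' 1 (p' i)
    rw [htp' i] at h
    have h2 : ⟪pu u u' 1, p' i⟫_ℝ - pα α α' 1 = 0 := by rw [h]; ring
    linarith
  have hD : D ≠ 0 := by
    have := hdet 0 (by norm_num) p hp hfib0
    rwa [prow_zero, ← hDdef] at this
  have hD' : D' ≠ 0 := by
    have := hdet 1 (by norm_num) p' hp' hfib1
    rw [prow_one, mat_smul_last, ← hD'def] at this
    intro h
    exact this (by rw [h]; ring)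
  by_contra hcon
  have hDD' : 0 < D * D' := by
    rcases lt_trichotomy (D * D') 0 with h | h | h
    · exact absurd h hcon
    · exact absurd (mul_eq_zero.1 h) (by push_neg; exact ⟨hD, hD'⟩)
    · exact h
  -- the sign function setup
  set G : ℝ × (Fin d → E) → ℝ := fun sx => D * (mat sx.2 (prow u u' α α' sx.1)).det with hGdef
  have hcontpu : Continuous fun s : ℝ => pu u u' s := by
    unfold pu
    fun_prop
  have hcontpα : Continuous fun s : ℝ => pα α α' s := by
    unfold pα
    fun_prop
  have contG : Continuous G := by
    apply continuous_const.mul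
    apply Continuous.matrix_det
    apply continuous_matrix
    intro i j
    rcases Fin.eq_castSucc_or_eq_last i with ⟨k, rfl⟩ | rfl
    · simp only [mat_castSucc]
      rcases Fin.eq_castSucc_or_eq_last j with ⟨l, rfl⟩ | rfl
      · simp only [lift_castSucc]
        exact (continuous_apply l).comp ((PiLp.continuous_ofLp 2 _).comp ((continuous_apply k).comp continuous_snd))
      · simp only [lift_last]
        exact continuous_const
    · simp only [mat_last]
      rcases Fin.eq_castSucc_or_eq_last j with ⟨l, rfl⟩ | rfl
      · show Continuous fun sx : ℝ × (Fin d → E) => prow u u' α α' sx.1 l.castSucc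
        have he : ∀ s : ℝ, prow u u' α α' s l.castSucc = pu u u' s l := by
          intro s
          rw [prow]
          simp
        simp only [he]
        exact (continuous_apply l).comp ((PiLp.continuous_ofLp 2 _).comp (hcontpu.comp continuous_fst))
      · show Continuous fun sx : ℝ × (Fin d → E) => prow u u' α α' sx.1 (Fin.last d)
        have he : ∀ s : ℝ, prow u u' α α' s (Fin.last d) = -(pα α α' s) := by
          intro s
          rw [prow]
          simp
        simp only [he]
        exact (hcontpα.comp continuous_fst).neg
  -- the two closed projected sets
  set Ω : Set (ℝ × (Fin d → E)) := (Set.Icc (0:ℝ) 1) ×ˢ (Set.univ.pi K) with hΩdef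
  have hΩcomp : IsCompact Ω := (isCompact_Icc).prod (isCompact_univ_pi hcomp)
  have hfibclosed : IsClosed {sx : ℝ × (Fin d → E) | ∀ i, ⟪pu u u' sx.1, sx.2 i⟫_ℝ = pα α α' sx.1} := by
    have he : {sx : ℝ × (Fin d → E) | ∀ i, ⟪pu u u' sx.1, sx.2 i⟫_ℝ = pα α α' sx.1}
        = ⋂ i, {sx : ℝ × (Fin d → E) | ⟪pu u u' sx.1, sx.2 i⟫_ℝ = pα α α' sx.1} := by
      ext sx
      simp [Set.mem_iInter]
    rw [he]
    apply isClosed_iInter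
    intro i
    apply isClosed_eq
    · exact Continuous.inner (hcontpu.comp continuous_fst) ((continuous_apply i).comp continuous_snd)
    · exact hcontpα.comp continuous_fst
  set Cp : Set (ℝ × (Fin d → E)) := Ω ∩ ({sx | ∀ i, ⟪pu u u' sx.1, sx.2 i⟫_ℝ = pα α α' sx.1} ∩ {sx | 0 ≤ G sx}) with hCpdef
  set Cm : Set (ℝ × (Fin d → E)) := Ω ∩ ({sx | ∀ i, ⟪pu u u' sx.1, sx.2 i⟫_ℝ = pα α α' sx.1} ∩ {sx | G sx ≤ 0}) with hCmdef
  have hCpc : IsCompact Cp := hΩcomp.inter_right (hfibclosed.inter (isClosed_le continuous_const contG))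
  have hCmc : IsCompact Cm := hΩcomp.inter_right (hfibclosed.inter (isClosed_le contG continuous_const))
  set Bp : Set ℝ := Prod.fst '' Cp with hBpdef
  set Bm : Set ℝ := Prod.fst '' Cm with hBmdef
  have hBpclosed : IsClosed Bp := (hCpc.image continuous_fst).isClosed
  have hBmclosed : IsClosed Bm := (hCmc.image continuous_fst).isClosed
  -- covering
  have hcover : Set.Icc (0:ℝ) 1 ⊆ Bp ∪ Bm := by
    intro s hs
    obtain ⟨x, hx, hf⟩ := hfib s hs
    rcases le_total 0 (G (s, x)) with h | h
    · exact Or.inl ⟨(s, x), ⟨⟨hs, by intro i _; exact hx i⟩, hf, h⟩, rfl⟩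
    · exact Or.inr ⟨(s, x), ⟨⟨hs, by intro i _; exact hx i⟩, hf, h⟩, rfl⟩
  -- endpoints
  have h0Bp : (0:ℝ) ∈ Set.Icc (0:ℝ) 1 ∩ Bp := by
    refine ⟨by norm_num, ⟨(0, p), ⟨⟨by norm_num, by intro i _; exact hp i⟩, hfib0, ?_⟩, rfl⟩⟩
    show 0 ≤ D * (mat p (prow u u' α α' 0)).det
    rw [prow_zero, ← hDdef]
    exact mul_self_nonneg D
  have h1Bm : (1:ℝ) ∈ Set.Icc (0:ℝ) 1 ∩ Bm := by
    refine ⟨by norm_num, ⟨(1, p'), ⟨⟨by norm_num, by intro i _; exact hp' i⟩, hfib1, ?_⟩, rfl⟩⟩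
    show D * (mat p' (prow u u' α α' 1)).det ≤ 0
    rw [prow_one, mat_smul_last, ← hD'def]
    nlinarith [hDD']
  -- no common point
  have hdisj : ∀ s ∈ Set.Icc (0:ℝ) 1, s ∈ Bp → s ∈ Bm → False := by
    intro s hsIcc hsp hsm
    obtain ⟨sx, ⟨⟨hxIcc, hxK⟩, hxfib, hxG⟩, hx1⟩ := hsp
    obtain ⟨sy, ⟨⟨hyIcc, hyK⟩, hyfib, hyG⟩, hy1⟩ := hsm
    simp only [Set.mem_setOf_eq] at hxfib hxG hyfib hyG
    have hxfib' : ∀ i, ⟪pu u u' s, sx.2 i⟫_ℝ = pα α α' s := by rw [← hx1]; exact hxfib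
    have hyfib' : ∀ i, ⟪pu u u' s, sy.2 i⟫_ℝ = pα α α' s := by rw [← hy1]; exact hyfib
    have hxG' : 0 ≤ G (s, sx.2) := by rw [← hx1]; simpa using hxG
    have hyG' : G (s, sy.2) ≤ 0 := by rw [← hy1]; simpa using hyG
    set x : Fin d → E := sx.2 with hxdef
    set y : Fin d → E := sy.2 with hydef
    -- the fiber is convex hence preconnected
    set Fib : Set (Fin d → E) :=
      Set.univ.pi (fun i => K i ∩ {z : E | ⟪pu u u' s, z⟫_ℝ = pα α α' s}) with hFibdef
    have hFibconv : Convex ℝ Fib := by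
      apply convex_pi
      intro i _
      apply (hconv i).inter
      intro a ha b hb ta tb hta htb htab
      simp only [Set.mem_setOf_eq] at ha hb ⊢
      rw [inner_add_right, real_inner_smul_right, real_inner_smul_right, ha, hb, ← add_mul, htab,
        one_mul]
    have hxFib : x ∈ Fib := by
      intro i _
      exact ⟨hxK i (Set.mem_univ i), hxfib' i⟩
    have hyFib : y ∈ Fib := by
      intro i _
      exact ⟨hyK i (Set.mem_univ i), hyfib' i⟩
    have hGcont : ContinuousOn (fun z : Fin d → E => G (s, z)) Fib := by
      apply Continuous.continuousOn
      exact contG.comp (Continuous.prodMk_right s)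
    have h0cont : ContinuousOn (fun _ : Fin d → E => (0:ℝ)) Fib := continuousOn_const
    obtain ⟨z, hzFib, hz⟩ := hFibconv.isPreconnected.intermediate_value₂ hyFib hxFib
      hGcont h0cont hyG' hxG' 
    have hzdet := hdet s hsIcc z (fun i => (hzFib i (Set.mem_univ i)).1)
      (fun i => (hzFib i (Set.mem_univ i)).2)
    apply hzdet
    have : D * (mat z (prow u u' α α' s)).det = 0 := hz
    rcases mul_eq_zero.1 this with h | h
    · exact absurd h hD
    · exact h
  -- contradiction with connectedness
  have hconc := (isPreconnected_closed_iff.1 (isPreconnected_Icc (a := (0:ℝ)) (b := 1)))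
    Bp Bm hBpclosed hBmclosed hcover ⟨0, h0Bp⟩ ⟨1, h1Bm⟩
  obtain ⟨s, hsIcc, hsp, hsm⟩ := hconc
  exact hdisj s hsIcc hsp hsm

end Pairwise

lemma exists_three {X : Type*} (S : Set X) (h : 2 < S.encard) :
    ∃ a b c, a ∈ S ∧ b ∈ S ∧ c ∈ S ∧ a ≠ b ∧ a ≠ c ∧ b ≠ c := by
  have h1 : 1 < S.encard := lt_trans (by norm_num) h
  obtain ⟨a, b, ha, hb, hab⟩ := Set.one_lt_encard_iff.1 h1
  have hd : 1 < (S \ {a}).encard := by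
    by_contra hle
    push_neg at hle
    have he := Set.encard_diff_singleton_add_one ha
    have h2 : S.encard ≤ 2 := by
      rw [← he]
      calc (S \ {a}).encard + 1 ≤ 1 + 1 := add_le_add_left hle 1
      _ = 2 := one_add_one_eq_two
    exact absurd h2 (not_le.2 h)
  obtain ⟨c, hc, hcb⟩ := Set.exists_ne_of_one_lt_encard hd b
  exact ⟨a, b, c, ha, hb, hc.1, hab, fun he => hc.2 (by simp [← he]), fun he => hcb he.symm⟩

lemma not_parallel
    (K : Fin d → Set E) (u u' : E) (α α' : ℝ) (hu : u ≠ 0)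
    (p p' : Fin d → E) (hp : ∀ i, p i ∈ K i) (hp' : ∀ i, p' i ∈ K i)
    (htp : ∀ i, ⟪u, p i⟫_ℝ = α) (htp' : ∀ i, ⟪u', p' i⟫_ℝ = α')
    (hside : ∀ i, ∀ y ∈ K i, α ≤ ⟪u, y⟫_ℝ) (hside' : ∀ i, ∀ y ∈ K i, α' ≤ ⟪u', y⟫_ℝ)
    (hne : {x : E | ⟪u, x⟫_ℝ = α} ≠ {x : E | ⟪u', x⟫_ℝ = α'}) :
    ∀ c : ℝ, 0 < c → u' ≠ c • u := by
  intro c hc hcu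
  -- get an index
  obtain ⟨i₀, -⟩ := Function.ne_iff.1 (fun h : u.ofLp = 0 => hu ((WithLp.ofLp_eq_zero 2).1 h))
  -- α' = c * α
  have h1 : c * α ≤ α' := by
    have ht := htp' i₀
    rw [hcu, real_inner_smul_left] at ht
    have hs := hside i₀ (p' i₀) (hp' i₀)
    nlinarith
  have h2 : α' ≤ c * α := by
    have hs := hside' i₀ (p i₀) (hp i₀)
    rw [hcu, real_inner_smul_left, htp i₀] at hs
    linarith
  have hαα : α' = c * α := le_antisymm h2 h1
  apply hne
  ext x
  simp only [Set.mem_setOf_eq]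
  constructor
  · intro hx
    rw [hcu, real_inner_smul_left, hx, hαα]
  · intro hx
    rw [hcu, real_inner_smul_left, hαα] at hx
    exact mul_left_cancel₀ (ne_of_gt hc) hx

end Sandwich


open Sandwich in
/-- For a strongly separated family of `d` convex bodies in `ℝ^d`, there are at most two
affine hyperplanes tangent to every body with every body on the same closed side. -/
theorem at_most_two_sandwiching_tangents {d : ℕ}
    (K : Fin d → Set (EuclideanSpace ℝ (Fin d)))
    (hcomp : ∀ i, IsCompact (K i)) (hconv : ∀ i, Convex ℝ (K i))
    (hint : ∀ i, (interior (K i)).Nonempty)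
    (hsep : StronglySeparated K) :
    {H : Set (EuclideanSpace ℝ (Fin d)) | ∃ (u : EuclideanSpace ℝ (Fin d)) (α : ℝ),
        u ≠ 0 ∧ H = {x | ⟪u, x⟫_ℝ = α} ∧
        ∀ i : Fin d, (H ∩ K i).Nonempty ∧ K i ⊆ {x | α ≤ ⟪u, x⟫_ℝ}}.encard ≤ 2 := by
  classical
  by_contra hcon
  push_neg at hcon
  obtain ⟨H₁, H₂, H₃, h1, h2, h3, h12, h13, h23⟩ := exists_three _ hcon
  obtain ⟨u₁, α₁, hu₁, hHeq₁, htan₁⟩ := h1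
  obtain ⟨u₂, α₂, hu₂, hHeq₂, htan₂⟩ := h2
  obtain ⟨u₃, α₃, hu₃, hHeq₃, htan₃⟩ := h3
  have hsep' : ∀ I : Finset (Fin d), ∃ (u : EuclideanSpace ℝ (Fin d)) (α : ℝ), u ≠ 0 ∧
      (∀ i ∈ I, ∀ x ∈ K i, ⟪u, x⟫_ℝ < α) ∧ (∀ i, i ∉ I → ∀ x ∈ K i, α < ⟪u, x⟫_ℝ) := hsep
  -- touch transversals
  have hex : ∀ (H : Set (EuclideanSpace ℝ (Fin d))) (u : EuclideanSpace ℝ (Fin d)) (α : ℝ),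
      H = {x | ⟪u, x⟫_ℝ = α} → (∀ i : Fin d, (H ∩ K i).Nonempty ∧ K i ⊆ {x | α ≤ ⟪u, x⟫_ℝ}) →
      ∀ i, ∃ y, y ∈ K i ∧ ⟪u, y⟫_ℝ = α := by
    intro H u α hHeq htan i
    obtain ⟨y, hy⟩ := (htan i).1
    have hy1 := hy.1
    rw [hHeq] at hy1
    exact ⟨y, hy.2, hy1⟩
  choose p₁ hp₁ ht₁ using hex H₁ u₁ α₁ hHeq₁ htan₁
  choose p₂ hp₂ ht₂ using hex H₂ u₂ α₂ hHeq₂ htan₂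
  choose p₃ hp₃ ht₃ using hex H₃ u₃ α₃ hHeq₃ htan₃
  have hs₁ : ∀ i, ∀ y ∈ K i, α₁ ≤ ⟪u₁, y⟫_ℝ := fun i y hy => (htan₁ i).2 hy
  have hs₂ : ∀ i, ∀ y ∈ K i, α₂ ≤ ⟪u₂, y⟫_ℝ := fun i y hy => (htan₂ i).2 hy
  have hs₃ : ∀ i, ∀ y ∈ K i, α₃ ≤ ⟪u₃, y⟫_ℝ := fun i y hy => (htan₃ i).2 hy
  -- non-parallelism
  have hne12 : {x : EuclideanSpace ℝ (Fin d) | ⟪u₁, x⟫_ℝ = α₁} ≠ {x | ⟪u₂, x⟫_ℝ = α₂} := by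
    rw [← hHeq₁, ← hHeq₂]; exact h12
  have hne13 : {x : EuclideanSpace ℝ (Fin d) | ⟪u₁, x⟫_ℝ = α₁} ≠ {x | ⟪u₃, x⟫_ℝ = α₃} := by
    rw [← hHeq₁, ← hHeq₃]; exact h13
  have hne23 : {x : EuclideanSpace ℝ (Fin d) | ⟪u₂, x⟫_ℝ = α₂} ≠ {x | ⟪u₃, x⟫_ℝ = α₃} := by
    rw [← hHeq₂, ← hHeq₃]; exact h23
  have hpar12 := not_parallel K u₁ u₂ α₁ α₂ hu₁ p₁ p₂ hp₁ hp₂ ht₁ ht₂ hs₁ hs₂ hne12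
  have hpar13 := not_parallel K u₁ u₃ α₁ α₃ hu₁ p₁ p₃ hp₁ hp₃ ht₁ ht₃ hs₁ hs₃ hne13
  have hpar23 := not_parallel K u₂ u₃ α₂ α₃ hu₂ p₂ p₃ hp₂ hp₃ ht₂ ht₃ hs₂ hs₃ hne23
  -- the three pairwise sign conditions
  have P12 := pairwise_opposite K hconv hcomp hsep' u₁ u₂ α₁ α₂ hu₁ hu₂ p₁ p₂ hp₁ hp₂ ht₁ ht₂
    hs₁ hs₂ hpar12
  have P13 := pairwise_opposite K hconv hcomp hsep' u₁ u₃ α₁ α₃ hu₁ hu₃ p₁ p₃ hp₁ hp₃ ht₁ ht₃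
    hs₁ hs₃ hpar13
  have P23 := pairwise_opposite K hconv hcomp hsep' u₂ u₃ α₂ α₃ hu₂ hu₃ p₂ p₃ hp₂ hp₃ ht₂ ht₃
    hs₂ hs₃ hpar23
  set D₁ := (mat p₁ (Fin.snoc (fun j => u₁ j) (-α₁))).det
  set D₂ := (mat p₂ (Fin.snoc (fun j => u₂ j) (-α₂))).det
  set D₃ := (mat p₃ (Fin.snoc (fun j => u₃ j) (-α₃))).det
  have hprod : 0 < (D₁ * D₂) * (D₁ * D₃) := mul_pos_of_neg_of_neg P12 P13
  nlinarith [hprod, P23, sq_nonneg D₁]
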